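/- For a definite canonical system G the following are equivalent: (1) strong consistency; (2) coherence; (3) strong cut-elimination; (4) cut-elimination (every sequent derivable from no assumptions has a cut-free proof); (5) consistency (p₁ ⇒ p₂ is not derivable from no assumptions). -/

import Mathlib

/-- A propositional language: a type of connectives with arities. -/
structure Lang where
  Conn : Type
  arity : Conn → ℕ

/-- Formulas over a language, with atoms indexed by ℕ. -/
inductive Fm (L : Lang) : Type
  | atom : ℕ → Fm L
  | conn : (c : L.Conn) → (Fin (L.arity c) → Fm L) → Fm L

/-- The substitution determined by its values on atoms. -/
def Fm.subst {L : Lang} (σ : ℕ → Fm L) : Fm L → Fm L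
  | .atom n => σ n
  | .conn c f => .conn c (fun i => (f i).subst σ)

/-- A non-strict single-conclusion sequent Γ ⇒ E. -/
structure Sequent (L : Lang) where
  left : Set (Fm L)
  right : Option (Fm L)

/-- A Horn clause over atoms p₁,…,pₙ (represented by `Fin n`). -/
structure Clause (n : ℕ) where
  lhs : Set (Fin n)
  rhs : Option (Fin n)

/-- A canonical right-introduction rule for a connective. -/
structure RightRule (L : Lang) where
  conn : L.Conn
  prem : Set (Clause (L.arity conn))

/-- A canonical left-introduction rule, with hard and soft premises. -/
structure LeftRule (L : Lang) where
  conn : L.Conn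
  hard : Set (Clause (L.arity conn))
  soft : Set (Set (Fin (L.arity conn)))

/-- A canonical system: a collection of canonical rules. -/
structure CanSys (L : Lang) where
  rights : Set (RightRule L)
  lefts : Set (LeftRule L)

/-- The sequent obtained by instantiating a clause with a substitution. -/
def Clause.seq {L : Lang} {n : ℕ} (σ : Fin n → Fm L) (c : Clause n) : Sequent L :=
  ⟨σ '' c.lhs, c.rhs.map σ⟩

/-- Derivability in a canonical system `G` from assumptions `S`,
where all cut formulas must belong to `C`. -/
inductive Deriv {L : Lang} (G : CanSys L) (S : Set (Sequent L)) (C : Set (Fm L)) :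
    Sequent L → Prop
  | hyp {s : Sequent L} : s ∈ S → Deriv G S C s
  | ax (φ : Fm L) : Deriv G S C ⟨{φ}, some φ⟩
  | weakL {Γ Γ' : Set (Fm L)} {E : Option (Fm L)} :
      Deriv G S C ⟨Γ, E⟩ → Γ ⊆ Γ' → Deriv G S C ⟨Γ', E⟩
  | weakR {Γ : Set (Fm L)} (ψ : Fm L) :
      Deriv G S C ⟨Γ, none⟩ → Deriv G S C ⟨Γ, some ψ⟩
  | cut {Γ Δ : Set (Fm L)} {φ : Fm L} {E : Option (Fm L)} :
      φ ∈ C → Deriv G S C ⟨Γ, some φ⟩ → Deriv G S C ⟨insert φ Δ, E⟩ →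
      Deriv G S C ⟨Γ ∪ Δ, E⟩
  | right {Γ : Set (Fm L)} (rr : RightRule L) (hr : rr ∈ G.rights)
      (σ : Fin (L.arity rr.conn) → Fm L) :
      (∀ c ∈ rr.prem, Deriv G S C ⟨Γ ∪ σ '' c.lhs, c.rhs.map σ⟩) →
      Deriv G S C ⟨Γ, some (Fm.conn rr.conn σ)⟩
  | left {Γ : Set (Fm L)} {E : Option (Fm L)} (lr : LeftRule L) (hl : lr ∈ G.lefts)
      (σ : Fin (L.arity lr.conn) → Fm L) :
      (∀ c ∈ lr.hard, Deriv G S C ⟨Γ ∪ σ '' c.lhs, c.rhs.map σ⟩) →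
      (∀ t ∈ lr.soft, Deriv G S C ⟨Γ ∪ σ '' t, E⟩) →
      Deriv G S C ⟨insert (Fm.conn lr.conn σ) Γ, E⟩

/-- The set of formulas occurring in some sequent of `S`. -/
def cutFms {L : Lang} (S : Set (Sequent L)) : Set (Fm L) :=
  {φ | ∃ s ∈ S, φ ∈ s.left ∨ s.right = some φ}

/-- Classical satisfaction of a Horn clause by a two-valued assignment. -/
def Clause.sat {n : ℕ} (v : Fin n → Bool) (c : Clause n) : Prop :=
  (∃ p ∈ c.lhs, v p = false) ∨ (∃ q, c.rhs = some q ∧ v q = true)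

/-- Joint classical satisfiability of the premises of a left rule and a right rule. -/
def JointSat {L : Lang} (lr : LeftRule L) (rr : RightRule L)
    (h : L.arity lr.conn = L.arity rr.conn) : Prop :=
  ∃ v : Fin (L.arity lr.conn) → Bool,
    (∀ c ∈ lr.hard, c.sat v) ∧
    (∀ t ∈ lr.soft, ∃ p ∈ t, v p = false) ∧
    (∀ c ∈ rr.prem, c.sat (fun i => v (Fin.cast h.symm i)))

/-- Coherence: matching left/right rule pairs have jointly unsatisfiable premises. -/
def Coherent {L : Lang} (G : CanSys L) : Prop :=
  ∀ lr ∈ G.lefts, ∀ rr ∈ G.rights, ∀ h : lr.conn = rr.conn,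
    ¬ JointSat lr rr (congrArg L.arity h)

section Semantics

variable {L : Lang} {W : Type}

/-- A sequent is locally true at a world. -/
def locT (v : W → Fm L → Bool) (a : W) (s : Sequent L) : Prop :=
  (∃ ψ ∈ s.left, v a ψ = false) ∨ (∃ φ, s.right = some φ ∧ v a φ = true)

/-- A sequent is (absolutely) true at a world: locally true at all successors. -/
def absT (le : W → W → Prop) (v : W → Fm L → Bool) (a : W) (s : Sequent L) : Prop :=
  ∀ b, le a b → locT v b s

/-- Persistence of a valuation. -/
def PersistentU (le : W → W → Prop) (v : W → Fm L → Bool) : Prop :=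
  ∀ (φ : Fm L) (a b : W), le a b → v a φ = true → v b φ = true

/-- A valuation respects a right-introduction rule. -/
def RespR (le : W → W → Prop) (v : W → Fm L → Bool) (rr : RightRule L) : Prop :=
  ∀ (a : W) (σ : Fin (L.arity rr.conn) → Fm L),
    (∀ c ∈ rr.prem, absT le v a (c.seq σ)) → v a (Fm.conn rr.conn σ) = true

/-- A valuation respects a left-introduction rule. -/
def RespL (le : W → W → Prop) (v : W → Fm L → Bool) (lr : LeftRule L) : Prop :=
  ∀ (a : W) (σ : Fin (L.arity lr.conn) → Fm L),
    (∀ c ∈ lr.hard, absT le v a (c.seq σ)) →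
    (∀ t ∈ lr.soft, locT v a ⟨σ '' t, (none : Option (Fm L))⟩) →
    v a (Fm.conn lr.conn σ) = false

/-- A valuation is G-legal: it respects all rules of G. -/
def LegalU (G : CanSys L) (le : W → W → Prop) (v : W → Fm L → Bool) : Prop :=
  (∀ rr ∈ G.rights, RespR le v rr) ∧ (∀ lr ∈ G.lefts, RespL le v lr)

end Semantics

/-- Semantic consequence: every G-legal frame which is a model of S is a model of s. -/
def SemConseq {L : Lang} (G : CanSys L) (S : Set (Sequent L)) (s : Sequent L) : Prop :=
  ∀ (W : Type) (le : W → W → Prop),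
    (∀ a, le a a) → (∀ a b c, le a b → le b c → le a c) →
    (∀ a b, le a b → le b a → a = b) → Nonempty W →
    ∀ v : W → Fm L → Bool, PersistentU le v → LegalU G le v →
      (∀ t ∈ S, ∀ a, locT v a t) → (∀ a, locT v a s)

/-- Strong consistency: the empty sequent is not derivable from { ⇒ p₁, p₂ ⇒ }. -/
def StronglyConsistent {L : Lang} (G : CanSys L) : Prop :=
  ¬ Deriv G ({⟨∅, some (Fm.atom 0)⟩, ⟨{Fm.atom 1}, none⟩} : Set (Sequent L))
      Set.univ ⟨∅, none⟩

/-- Strong cut-elimination. -/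
def StrongCutElim {L : Lang} (G : CanSys L) : Prop :=
  ∀ (S : Set (Sequent L)) (s : Sequent L),
    Deriv G S Set.univ s → Deriv G S (cutFms S) s

/-- Cut-elimination for proofs from no assumptions. -/
def CutElim {L : Lang} (G : CanSys L) : Prop :=
  ∀ s : Sequent L, Deriv G ∅ Set.univ s → Deriv G ∅ ∅ s

/-- Consistency: p₁ ⇒ p₂ is not derivable from no assumptions. -/
def Consistent {L : Lang} (G : CanSys L) : Prop :=
  ¬ Deriv G ∅ Set.univ ⟨{Fm.atom 0}, some (Fm.atom 1)⟩

/-- A canonical system is definite if all premises of right rules and all hard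
premises of left rules are definite clauses. -/
def DefiniteSys {L : Lang} (G : CanSys L) : Prop :=
  (∀ rr ∈ G.rights, ∀ c ∈ rr.prem, c.rhs.isSome = true) ∧
  (∀ lr ∈ G.lefts, ∀ c ∈ lr.hard, c.rhs.isSome = true)

section Helpers
variable {L : Lang} {G : CanSys L} {S : Set (Sequent L)} {C : Set (Fm L)}

lemma Deriv.memAx {Γ : Set (Fm L)} {φ : Fm L} (h : φ ∈ Γ) :
    Deriv G S C ⟨Γ, some φ⟩ :=
  Deriv.weakL (Deriv.ax φ) (by intro x hx; simp only [Set.mem_singleton_iff] at hx; subst hx; exact h)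

lemma Deriv.ofNone {Γ : Set (Fm L)} (h : Deriv G S C ⟨Γ, none⟩) :
    ∀ E, Deriv G S C ⟨Γ, E⟩
  | none => h
  | some ψ => Deriv.weakR ψ h

end Helpers
section CutAdm
variable {L : Lang} {G : CanSys L} {S : Set (Sequent L)}

/-- Admissibility of cut on a formula, with cut formulas restricted to `cutFms S`. -/
def Adm (G : CanSys L) (S : Set (Sequent L)) (φ : Fm L) : Prop :=
  ∀ Γ Δ E, Deriv G S (cutFms S) ⟨Γ, some φ⟩ → Deriv G S (cutFms S) ⟨insert φ Δ, E⟩ →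
    Deriv G S (cutFms S) ⟨Γ ∪ Δ, E⟩

lemma multicut {GG : Set (Fm L)} {e : Option (Fm L)} :
    ∀ X : Set (Fm L), X.Finite → (∀ ψ ∈ X, Adm G S ψ) →
    (∀ ψ ∈ X, Deriv G S (cutFms S) ⟨GG, some ψ⟩) →
    Deriv G S (cutFms S) ⟨GG ∪ X, e⟩ → Deriv G S (cutFms S) ⟨GG, e⟩ := by
  intro X hX
  refine Set.Finite.induction_on X hX (fun _ _ h => by simpa using h) ?_
  intro a s ha hs ih hadm hder h
  have h' : Deriv G S (cutFms S) ⟨insert a (GG ∪ s), e⟩ := by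
    rwa [Set.union_insert] at h
  have hcut := hadm a (Set.mem_insert a s) GG (GG ∪ s) e
    (hder a (Set.mem_insert a s)) h'
  have : Deriv G S (cutFms S) ⟨GG ∪ s, e⟩ := by
    refine hcut.weakL ?_
    intro x hx; rcases hx with hx | hx
    · exact Or.inl hx
    · exact hx
  exact ih (fun ψ hψ => hadm ψ (Set.mem_insert_of_mem _ hψ))
    (fun ψ hψ => hder ψ (Set.mem_insert_of_mem _ hψ)) this

end CutAdm
section CutL
variable {L : Lang} {G : CanSys L} {S : Set (Sequent L)}

lemma cutL (φ : Fm L) (hφ : φ ∉ cutFms S)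
    (hright : ∀ (Γ : Set (Fm L)) (rr : RightRule L), rr ∈ G.rights →
      ∀ σ : Fin (L.arity rr.conn) → Fm L, Fm.conn rr.conn σ = φ →
      (∀ cl ∈ rr.prem, Deriv G S (cutFms S) ⟨Γ ∪ σ '' cl.lhs, cl.rhs.map σ⟩) →
      ∀ Δ E, Deriv G S (cutFms S) ⟨insert φ Δ, E⟩ → Deriv G S (cutFms S) ⟨Γ ∪ Δ, E⟩) :
    ∀ s, Deriv G S (cutFms S) s → ∀ Γ, s = ⟨Γ, some φ⟩ → ∀ Δ E,
      Deriv G S (cutFms S) ⟨insert φ Δ, E⟩ → Deriv G S (cutFms S) ⟨Γ ∪ Δ, E⟩ := by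
  intro s d
  induction d with
  | @hyp s1 hs =>
    intro Γ he Δ E d2
    subst he
    exact absurd ⟨_, hs, Or.inr rfl⟩ hφ
  | ax ψ =>
    intro Γ he Δ E d2
    rw [Sequent.mk.injEq] at he
    obtain ⟨rfl, h2⟩ := he
    injection h2 with h2
    subst h2
    rw [Set.insert_eq] at d2
    exact d2
  | @weakL Γ1 Γ2 E1 d hsub ih =>
    intro Γ he Δ E d2
    rw [Sequent.mk.injEq] at he
    obtain ⟨rfl, rfl⟩ := he
    exact (ih Γ1 rfl Δ E d2).weakL (Set.union_subset_union hsub (subset_refl Δ))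
  | @weakR Γ1 ψ d ih =>
    intro Γ he Δ E d2
    rw [Sequent.mk.injEq] at he
    obtain ⟨rfl, h2⟩ := he
    exact (d.weakL (Set.subset_union_left (t := Δ))).ofNone E
  | @cut Γ1 Δ1 ψ E1 hψC da db iha ihb =>
    intro Γ he Δ E d2
    rw [Sequent.mk.injEq] at he
    obtain ⟨rfl, rfl⟩ := he
    have hb := ihb _ rfl Δ E d2
    rw [Set.insert_union] at hb
    have := Deriv.cut hψC da hb
    rwa [← Set.union_assoc] at this
  | @right Γ1 rr hr σ prems ih =>
    intro Γ he Δ E d2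
    rw [Sequent.mk.injEq] at he
    obtain ⟨rfl, h2⟩ := he
    injection h2 with h2
    exact hright Γ1 rr hr σ h2 prems Δ E d2
  | @left Γ1 E1 lr hl σ hards softs ihh ihs =>
    intro Γ he Δ E d2
    rw [Sequent.mk.injEq] at he
    obtain ⟨rfl, rfl⟩ := he
    have hcon : Deriv G S (cutFms S) ⟨insert (Fm.conn lr.conn σ) (Γ1 ∪ Δ), E⟩ := by
      refine Deriv.left lr hl σ ?_ ?_
      · intro cl hcl
        exact (hards cl hcl).weakL
          (Set.union_subset_union (Set.subset_union_left) (subset_refl _))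
      · intro t ht
        have := ihs t ht _ rfl Δ E d2
        refine this.weakL ?_
        intro x hx
        rcases hx with (hx | hx) | hx
        · exact Or.inl (Or.inl hx)
        · exact Or.inr hx
        · exact Or.inl (Or.inr hx)
    rwa [← Set.insert_union] at hcon
end CutL
section CutR
variable {L : Lang} {G : CanSys L} {S : Set (Sequent L)}

lemma cutR (hdef : DefiniteSys G) (hcoh : Coherent G)
    (rc : L.Conn) (σf : Fin (L.arity rc) → Fm L)
    (ihsub : ∀ i, Adm G S (σf i))
    (hφ : (Fm.conn rc σf : Fm L) ∉ cutFms S)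
    (Γ₀ : Set (Fm L)) (rprem : Set (Clause (L.arity rc)))
    (hr : (⟨rc, rprem⟩ : RightRule L) ∈ G.rights)
    (prems : ∀ cl ∈ rprem, Deriv G S (cutFms S) ⟨Γ₀ ∪ σf '' cl.lhs, cl.rhs.map σf⟩) :
    ∀ s2, Deriv G S (cutFms S) s2 →
      Deriv G S (cutFms S) ⟨Γ₀ ∪ (s2.left \ {Fm.conn rc σf}), s2.right⟩ := by
  intro s2 d2
  induction d2 with
  | @hyp s1 hs =>
    have hnot : Fm.conn rc σf ∉ s1.left := fun hmem' => hφ ⟨s1, hs, Or.inl hmem'⟩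
    refine (Deriv.hyp hs).weakL ?_
    rw [Set.diff_singleton_eq_self hnot]
    exact Set.subset_union_right
  | ax ψ =>
    by_cases hψφ : ψ = Fm.conn rc σf
    · subst hψφ
      exact (Deriv.right _ hr σf prems).weakL Set.subset_union_left
    · exact Deriv.memAx (Or.inr (by simp [hψφ]))
  | @weakL Γ1 Γ2 E1 d hsub ih =>
    exact ih.weakL (Set.union_subset_union (subset_refl _)
      (Set.diff_subset_diff_left hsub))
  | @weakR Γ1 ψ d ih =>
    exact ih.weakR ψ
  | @cut Γ1 Δ1 ψ E1 hψC da db iha ihb =>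
    have hne : ψ ≠ Fm.conn rc σf := fun h => hφ (h ▸ hψC)
    rw [show (insert ψ Δ1 : Set (Fm L)) \ {Fm.conn rc σf}
        = insert ψ (Δ1 \ {Fm.conn rc σf}) from
      Set.insert_diff_of_notMem _ (by simp [hne])] at ihb
    have ihb' := ihb.weakL (show Γ₀ ∪ insert ψ (Δ1 \ {Fm.conn rc σf})
        ⊆ insert ψ (Γ₀ ∪ (Δ1 \ {Fm.conn rc σf})) by
      intro x hx; rcases hx with hx | hx
      · exact Or.inr (Or.inl hx)
      · rcases hx with hx | hx
        · exact Or.inl hx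
        · exact Or.inr (Or.inr hx))
    have hc := Deriv.cut hψC iha ihb'
    refine hc.weakL ?_
    rw [Set.union_diff_distrib]
    intro x hx
    rcases hx with (hx | hx) | (hx | hx)
    · exact Or.inl hx
    · exact Or.inr (Or.inl hx)
    · exact Or.inl hx
    · exact Or.inr (Or.inr hx)
  | @right Γ1 rr' hr' σ' prems' ih' =>
    refine Deriv.right rr' hr' σ' ?_
    intro cl hcl
    refine (ih' cl hcl).weakL ?_
    rw [Set.union_diff_distrib]
    intro x hx
    rcases hx with hx | (hx | hx)
    · exact Or.inl (Or.inl hx)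
    · exact Or.inl (Or.inr hx)
    · exact Or.inr hx.1
  | @left Γ1 E1 lr hl' σ' hards softs ihh ihs =>
    obtain ⟨lc, lhard, lsoft⟩ := lr
    by_cases hθ : (Fm.conn lc σ' : Fm L) = Fm.conn rc σf
    · -- principal case
      injection hθ with h1 h2
      subst h1
      have h2' := eq_of_heq h2
      subst h2'
      classical
      rw [show (insert (Fm.conn lc σ') Γ1 : Set (Fm L)) \ {Fm.conn lc σ'}
          = Γ1 \ {Fm.conn lc σ'} from Set.insert_diff_of_mem _ rfl]
      set GG := Γ₀ ∪ (Γ1 \ ({Fm.conn lc σ'} : Set (Fm L))) with hGG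
      -- minimal Horn model
      set Reach : Fin (L.arity lc) → Prop := fun i =>
        ∀ A : Set (Fin (L.arity lc)),
          (∀ cl ∈ lhard, cl.lhs ⊆ A → ∀ q, cl.rhs = some q → q ∈ A) →
          (∀ cl ∈ rprem, cl.lhs ⊆ A → ∀ q, cl.rhs = some q → q ∈ A) → i ∈ A
        with hReach
      -- multicut over an image of a set of indices
      have hMC : ∀ (X : Set (Fin (L.arity lc))) (e : Option (Fm L)),
          (∀ p ∈ X, Deriv G S (cutFms S) ⟨GG, some (σ' p)⟩) →
          Deriv G S (cutFms S) ⟨GG ∪ σ' '' X, e⟩ →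
          Deriv G S (cutFms S) ⟨GG, e⟩ := by
        intro X e hd hder
        refine multicut (σ' '' X) ((Set.toFinite X).image σ') ?_ ?_ hder
        · rintro ψ ⟨p, hp, rfl⟩; exact ihsub p
        · rintro ψ ⟨p, hp, rfl⟩; exact hd p hp
      -- hard premises, cut down to GG-context
      have hhard : ∀ cl ∈ lhard, Deriv G S (cutFms S)
          ⟨GG ∪ σ' '' cl.lhs, cl.rhs.map σ'⟩ := by
        intro cl hcl
        refine (ihh cl hcl).weakL ?_
        rw [Set.union_diff_distrib]
        intro x hx
        rcases hx with hx | (hx | hx)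
        · exact Or.inl (Or.inl hx)
        · exact Or.inl (Or.inr hx)
        · exact Or.inr hx.1
      have hprem : ∀ cl ∈ rprem, Deriv G S (cutFms S)
          ⟨GG ∪ σ' '' cl.lhs, cl.rhs.map σ'⟩ := by
        intro cl hcl
        refine (prems cl hcl).weakL ?_
        exact Set.union_subset_union Set.subset_union_left (subset_refl _)
      -- reachable indices are derivable
      have hAder : ∀ i, Reach i → Deriv G S (cutFms S) ⟨GG, some (σ' i)⟩ := by
        intro i hi
        refine hi {j | Deriv G S (cutFms S) ⟨GG, some (σ' j)⟩} ?_ ?_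
        · intro cl hcl hsub q hq
          have step := hhard cl hcl
          rw [hq] at step
          exact hMC cl.lhs _ (fun p hp => hsub hp) step
        · intro cl hcl hsub q hq
          have step := hprem cl hcl
          rw [hq] at step
          exact hMC cl.lhs _ (fun p hp => hsub hp) step
      set v : Fin (L.arity lc) → Bool := fun i => decide (Reach i) with hv
      have hsatl : ∀ cl ∈ lhard, Clause.sat v cl := by
        intro cl hcl
        by_cases hall : ∀ p ∈ cl.lhs, Reach p
        · obtain ⟨q, hq⟩ := Option.isSome_iff_exists.mp (hdef.2 _ hl' cl hcl)
          refine Or.inr ⟨q, hq, ?_⟩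
          simp only [hv, decide_eq_true_eq]
          exact fun A c1 c2 => c1 cl hcl (fun p hp => hall p hp A c1 c2) q hq
        · push_neg at hall
          obtain ⟨p, hp, hnp⟩ := hall
          exact Or.inl ⟨p, hp, by simp [hv, hnp]⟩
      have hsatr : ∀ cl ∈ rprem, Clause.sat v cl := by
        intro cl hcl
        by_cases hall : ∀ p ∈ cl.lhs, Reach p
        · obtain ⟨q, hq⟩ := Option.isSome_iff_exists.mp (hdef.1 _ hr cl hcl)
          refine Or.inr ⟨q, hq, ?_⟩
          simp only [hv, decide_eq_true_eq]
          exact fun A c1 c2 => c2 cl hcl (fun p hp => hall p hp A c1 c2) q hq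
        · push_neg at hall
          obtain ⟨p, hp, hnp⟩ := hall
          exact Or.inl ⟨p, hp, by simp [hv, hnp]⟩
      have hns := hcoh ⟨lc, lhard, lsoft⟩ hl' ⟨lc, rprem⟩ hr rfl
      have hsoft : ∃ t ∈ lsoft, ∀ p ∈ t, Reach p := by
        by_contra hcon
        push_neg at hcon
        refine hns ⟨v, hsatl, ?_, ?_⟩
        · intro t ht
          obtain ⟨p, hp, hnp⟩ := hcon t ht
          exact ⟨p, hp, by simp [hv, hnp]⟩
        · intro cl hcl
          have : (fun i => v (Fin.cast (congrArg L.arity (rfl : (LeftRule.mk lc lhard lsoft).conn = (RightRule.mk lc rprem).conn)).symm i)) = v := by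
            funext i; rfl
          rw [this]
          exact hsatr cl hcl
      obtain ⟨t, ht, hallt⟩ := hsoft
      have hsoftprem : Deriv G S (cutFms S) ⟨GG ∪ σ' '' t, E1⟩ := by
        refine (ihs t ht).weakL ?_
        rw [Set.union_diff_distrib]
        intro x hx
        rcases hx with hx | (hx | hx)
        · exact Or.inl (Or.inl hx)
        · exact Or.inl (Or.inr hx)
        · exact Or.inr hx.1
      exact hMC t E1 (fun p hp => hAder p (hallt p hp)) hsoftprem
    · -- non-principal left
      rw [show (insert (Fm.conn lc σ') Γ1 : Set (Fm L)) \ {Fm.conn rc σf}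
          = insert (Fm.conn lc σ') (Γ1 \ {Fm.conn rc σf}) from
        Set.insert_diff_of_notMem _ (by simp [hθ])]
      rw [show (Γ₀ ∪ insert (Fm.conn lc σ') (Γ1 \ {Fm.conn rc σf}) : Set (Fm L))
          = insert (Fm.conn lc σ') (Γ₀ ∪ (Γ1 \ {Fm.conn rc σf})) from Set.union_insert ..]
      refine Deriv.left ⟨lc, lhard, lsoft⟩ hl' σ' ?_ ?_
      · intro cl hcl
        refine (ihh cl hcl).weakL ?_
        rw [Set.union_diff_distrib]
        intro x hx
        rcases hx with hx | (hx | hx)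
        · exact Or.inl (Or.inl hx)
        · exact Or.inl (Or.inr hx)
        · exact Or.inr hx.1
      · intro t ht
        refine (ihs t ht).weakL ?_
        rw [Set.union_diff_distrib]
        intro x hx
        rcases hx with hx | (hx | hx)
        · exact Or.inl (Or.inl hx)
        · exact Or.inl (Or.inr hx)
        · exact Or.inr hx.1
end CutR
section AdmAll
variable {L : Lang} {G : CanSys L} {S : Set (Sequent L)}

theorem adm_all (hdef : DefiniteSys G) (hcoh : Coherent G) : ∀ φ : Fm L, Adm G S φ := by
  intro φ
  induction φ with
  | atom n =>
    intro Γ Δ E d1 d2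
    by_cases hmem : (Fm.atom n : Fm L) ∈ cutFms S
    · exact Deriv.cut hmem d1 d2
    · refine cutL (Fm.atom n) hmem ?_ _ d1 Γ rfl Δ E d2
      intro Γ₀ rr hr σ hψ prems Δ' E' d2'
      exact absurd hψ (fun h => by cases h)
  | conn c σf ihsub =>
    intro Γ Δ E d1 d2
    by_cases hmem : (Fm.conn c σf : Fm L) ∈ cutFms S
    · exact Deriv.cut hmem d1 d2
    · refine cutL (Fm.conn c σf) hmem ?_ _ d1 Γ rfl Δ E d2
      intro Γ₀ rr hr σ hψ prems Δ' E' d2'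
      obtain ⟨rc, rprem⟩ := rr
      injection hψ with h1 h2
      subst h1
      have h2' := eq_of_heq h2
      subst h2'
      have := cutR hdef hcoh rc σ ihsub hmem Γ₀ rprem hr prems _ d2'
      refine this.weakL ?_
      intro x hx
      rcases hx with hx | hx
      · exact Or.inl hx
      · rcases hx.1 with h | h
        · exact absurd h hx.2
        · exact Or.inr h

theorem coh_sce (hdef : DefiniteSys G) (hcoh : Coherent G) : StrongCutElim G := by
  intro S s d
  induction d with
  | hyp hs => exact Deriv.hyp hs
  | ax ψ => exact Deriv.ax ψ
  | weakL d hsub ih => exact ih.weakL hsub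
  | weakR ψ d ih => exact ih.weakR ψ
  | cut hψ da db iha ihb => exact adm_all hdef hcoh _ _ _ _ iha ihb
  | right rr hr σ prems ih => exact Deriv.right rr hr σ ih
  | left lr hl σ hards softs ihh ihs => exact Deriv.left lr hl σ ihh ihs
end AdmAll
section BoolModel
variable {L : Lang}

open Classical in
noncomputable def wval (G : CanSys L) : Fm L → Bool :=
  Fm.rec (fun n => decide (n = 0))
    (fun c _σ ih => decide (∃ rr ∈ G.rights, ∃ h : rr.conn = c, ∀ cl ∈ rr.prem,
      (∃ p ∈ cl.lhs, ih (Fin.cast (congrArg L.arity h) p) = false) ∨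
      (∃ q, cl.rhs = some q ∧ ih (Fin.cast (congrArg L.arity h) q) = true)))

lemma wval_atom (G : CanSys L) (n : ℕ) : wval G (Fm.atom n) = decide (n = 0) := rfl

open Classical in
lemma wval_conn_eq (G : CanSys L) (c : L.Conn) (σ : Fin (L.arity c) → Fm L) :
    wval G (Fm.conn c σ) = true ↔
      (∃ rr ∈ G.rights, ∃ h : rr.conn = c, ∀ cl ∈ rr.prem,
        (∃ p ∈ cl.lhs, wval G (σ (Fin.cast (congrArg L.arity h) p)) = false) ∨
        (∃ q, cl.rhs = some q ∧ wval G (σ (Fin.cast (congrArg L.arity h) q)) = true)) := by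
  exact decide_eq_true_iff

lemma wsound {G : CanSys L} (hcoh : Coherent G) {S : Set (Sequent L)}
    (hS : ∀ s ∈ S, (∃ ψ ∈ s.left, wval G ψ = false) ∨
        (∃ φ, s.right = some φ ∧ wval G φ = true)) :
    ∀ s, Deriv G S Set.univ s → (∃ ψ ∈ s.left, wval G ψ = false) ∨
        (∃ φ, s.right = some φ ∧ wval G φ = true) := by
  intro s d
  induction d with
  | @hyp s1 hs => exact hS s1 hs
  | ax ψ =>
    by_cases h : wval G ψ = true
    · exact Or.inr ⟨ψ, rfl, h⟩
    · exact Or.inl ⟨ψ, rfl, by simpa using h⟩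
  | @weakL Γ1 Γ2 E1 d hsub ih =>
    rcases ih with ⟨ψ, hψ, hf⟩ | h
    · exact Or.inl ⟨ψ, hsub hψ, hf⟩
    · exact Or.inr h
  | @weakR Γ1 ψ d ih =>
    rcases ih with ⟨ψ', hψ', hf⟩ | ⟨φ, hφ, _⟩
    · exact Or.inl ⟨ψ', hψ', hf⟩
    · exact absurd hφ (by simp)
  | @cut Γ1 Δ1 ψ E1 hψC da db iha ihb =>
    rcases iha with ⟨ψ', hψ', hf⟩ | ⟨φ, hφ, ht⟩
    · exact Or.inl ⟨ψ', Or.inl hψ', hf⟩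
    · injection hφ with hφ; subst hφ
      rcases ihb with ⟨ψ', hψ', hf⟩ | h
      · rcases hψ' with h' | h'
        · subst h'; rw [hf] at ht; exact absurd ht (by simp)
        · exact Or.inl ⟨ψ', Or.inr h', hf⟩
      · exact Or.inr h
  | @right Γ1 rr hr σ prems ih =>
    by_cases hΓ : ∃ ψ ∈ Γ1, wval G ψ = false
    · obtain ⟨ψ, hψ, hf⟩ := hΓ
      exact Or.inl ⟨ψ, hψ, hf⟩
    · push_neg at hΓ
      refine Or.inr ⟨_, rfl, ?_⟩
      rw [wval_conn_eq]
      refine ⟨rr, hr, rfl, ?_⟩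
      intro cl hcl
      rcases ih cl hcl with ⟨ψ, hψ, hf⟩ | ⟨φ, hφ, ht⟩
      · rcases hψ with h' | ⟨p, hp, rfl⟩
        · exact absurd hf (hΓ ψ h')
        · exact Or.inl ⟨p, hp, hf⟩
      · rw [Option.map_eq_some_iff] at hφ
        obtain ⟨q, hq, rfl⟩ := hφ
        exact Or.inr ⟨q, hq, ht⟩
  | @left Γ1 E1 lr hl σ hards softs ihh ihs =>
    by_cases hΓ : ∃ ψ ∈ Γ1, wval G ψ = false
    · obtain ⟨ψ, hψ, hf⟩ := hΓ
      exact Or.inl ⟨ψ, Or.inr hψ, hf⟩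
    · push_neg at hΓ
      by_cases hE : ∃ φ, E1 = some φ ∧ wval G φ = true
      · exact Or.inr hE
      · refine Or.inl ⟨Fm.conn lr.conn σ, Or.inl rfl, ?_⟩
        by_contra hw
        have hw' : wval G (Fm.conn lr.conn σ) = true := by simpa using hw
        rw [wval_conn_eq] at hw'
        obtain ⟨rr, hr, hconn, hclauses⟩ := hw'
        refine hcoh lr hl rr hr hconn.symm ⟨fun i => wval G (σ i), ?_, ?_, ?_⟩
        · intro cl hcl
          rcases ihh cl hcl with ⟨ψ, hψ, hf⟩ | ⟨φ, hφ, ht⟩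
          · rcases hψ with h' | ⟨p, hp, rfl⟩
            · exact absurd hf (hΓ ψ h')
            · exact Or.inl ⟨p, hp, hf⟩
          · rw [Option.map_eq_some_iff] at hφ
            obtain ⟨q, hq, rfl⟩ := hφ
            exact Or.inr ⟨q, hq, ht⟩
        · intro t ht
          rcases ihs t ht with ⟨ψ, hψ, hf⟩ | h
          · rcases hψ with h' | ⟨p, hp, rfl⟩
            · exact absurd hf (hΓ ψ h')
            · exact ⟨p, hp, hf⟩
          · exact absurd h hE
        · intro cl hcl
          rcases hclauses cl hcl with ⟨p, hp, hf⟩ | ⟨q, hq, ht⟩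
          · exact Or.inl ⟨p, hp, hf⟩
          · exact Or.inr ⟨q, hq, ht⟩

lemma coh_sc {G : CanSys L} (hcoh : Coherent G) : StronglyConsistent G := by
  intro d
  have := wsound hcoh (S := {⟨∅, some (Fm.atom 0)⟩, ⟨{Fm.atom 1}, none⟩}) ?_ _ d
  · rcases this with ⟨ψ, hψ, _⟩ | ⟨φ, hφ, _⟩
    · exact hψ
    · exact (by cases hφ)
  · intro s hs
    rcases hs with rfl | rfl
    · exact Or.inr ⟨Fm.atom 0, rfl, by rw [wval_atom]; simp⟩
    · exact Or.inl ⟨Fm.atom 1, rfl, by rw [wval_atom]; simp⟩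
end BoolModel
section Rest
variable {L : Lang}

lemma sc_coh {G : CanSys L} (hsc : StronglyConsistent G) : Coherent G := by
  intro lr hl rr hr h hjs
  apply hsc
  obtain ⟨lc, lhard, lsoft⟩ := lr
  cases h
  obtain ⟨v, hhard, hsoft, hprem⟩ := hjs
  set S₀ : Set (Sequent L) := {⟨∅, some (Fm.atom 0)⟩, ⟨{Fm.atom 1}, none⟩} with hS₀
  set σ : Fin (L.arity rr.conn) → Fm L :=
    fun i => if v i = true then Fm.atom 0 else Fm.atom 1 with hσ
  have hsat : ∀ (Γ : Set (Fm L)) (cl : Clause (L.arity rr.conn)), Clause.sat v cl →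
      Deriv G S₀ Set.univ ⟨Γ ∪ σ '' cl.lhs, cl.rhs.map σ⟩ := by
    intro Γ cl hs
    rcases hs with ⟨p, hp, hf⟩ | ⟨q, hq, ht⟩
    · have h1 : Fm.atom 1 ∈ Γ ∪ σ '' cl.lhs := Or.inr ⟨p, hp, by simp [hσ, hf]⟩
      have hd : Deriv G S₀ Set.univ ⟨Γ ∪ σ '' cl.lhs, none⟩ :=
        (Deriv.hyp (show (⟨{Fm.atom 1}, none⟩ : Sequent L) ∈ S₀ from Or.inr rfl)).weakL
        (show {Fm.atom 1} ⊆ Γ ∪ σ '' cl.lhs by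
          intro x hx; rcases hx with rfl; exact h1)
      exact hd.ofNone _
    · rw [hq, show ((some q).map σ) = some (Fm.atom 0) by simp [hσ, ht]]
      exact Deriv.weakL (C := Set.univ)
        (Deriv.hyp (show (⟨∅, some (Fm.atom 0)⟩ : Sequent L) ∈ S₀ from Or.inl rfl))
        (Set.empty_subset _)
  have dright : Deriv G S₀ Set.univ ⟨∅, some (Fm.conn rr.conn σ)⟩ :=
    Deriv.right rr hr σ (fun cl hcl => hsat ∅ cl (hprem cl hcl))
  have dleft : Deriv G S₀ Set.univ ⟨insert (Fm.conn rr.conn σ) ∅, none⟩ := by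
    refine Deriv.left ⟨rr.conn, lhard, lsoft⟩ hl σ ?_ ?_
    · intro cl hcl; exact hsat ∅ cl (hhard cl hcl)
    · intro t ht
      obtain ⟨p, hp, hf⟩ := hsoft t ht
      have h1 : Fm.atom 1 ∈ (∅ : Set (Fm L)) ∪ σ '' t := Or.inr ⟨p, hp, by simp [hσ, hf]⟩
      exact Deriv.weakL (C := Set.univ)
        (Deriv.hyp (show (⟨{Fm.atom 1}, none⟩ : Sequent L) ∈ S₀ from Or.inr rfl))
        (by intro x hx; rcases hx with rfl; exact h1)
  have hcut := Deriv.cut (Set.mem_univ _) dright dleft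
  rwa [Set.union_empty] at hcut

lemma cons_coh {G : CanSys L} (hdef : DefiniteSys G) (hcons : Consistent G) : Coherent G := by
  intro lr hl rr hr h hjs
  apply hcons
  obtain ⟨lc, lhard, lsoft⟩ := lr
  cases h
  obtain ⟨v, hhard, hsoft, hprem⟩ := hjs
  set σ : Fin (L.arity rr.conn) → Fm L :=
    fun i => if v i = true then Fm.atom 0 else Fm.atom 1 with hσ
  have hsat : ∀ (Γ : Set (Fm L)) (cl : Clause (L.arity rr.conn)), Fm.atom 0 ∈ Γ →
      cl.rhs.isSome = true → Clause.sat v cl →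
      Deriv G ∅ Set.univ ⟨Γ ∪ σ '' cl.lhs, cl.rhs.map σ⟩ := by
    intro Γ cl h0 hsome hs
    obtain ⟨q, hq⟩ := Option.isSome_iff_exists.mp hsome
    rw [hq]
    by_cases hvq : v q = true
    · rw [show ((some q).map σ) = some (Fm.atom 0) by simp [hσ, hvq]]
      exact Deriv.memAx (Or.inl h0)
    · rw [show ((some q).map σ) = some (Fm.atom 1) by simp [hσ, hvq]]
      rcases hs with ⟨p, hp, hf⟩ | ⟨q', hq', ht⟩
      · exact Deriv.memAx (Or.inr ⟨p, hp, by simp [hσ, hf]⟩)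
      · rw [hq] at hq'; injection hq' with hq'; subst hq'; exact absurd ht hvq
  have dright : Deriv G ∅ Set.univ ⟨{Fm.atom 0}, some (Fm.conn rr.conn σ)⟩ :=
    Deriv.right rr hr σ (fun cl hcl =>
      hsat {Fm.atom 0} cl rfl (hdef.1 rr hr cl hcl) (hprem cl hcl))
  have dleft : Deriv G ∅ Set.univ
      ⟨insert (Fm.conn rr.conn σ) {Fm.atom 0}, some (Fm.atom 1)⟩ := by
    refine Deriv.left ⟨rr.conn, lhard, lsoft⟩ hl σ ?_ ?_
    · intro cl hcl; exact hsat {Fm.atom 0} cl rfl (hdef.2 _ hl cl hcl) (hhard cl hcl)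
    · intro t ht
      obtain ⟨p, hp, hf⟩ := hsoft t ht
      exact Deriv.memAx (Or.inr ⟨p, hp, by simp [hσ, hf]⟩)
  have hcut := Deriv.cut (Set.mem_univ _) dright dleft
  rwa [Set.union_self] at hcut

lemma cutfree_cons {G : CanSys L} :
    ∀ s, Deriv G ∅ (∅ : Set (Fm L)) s →
      ¬ (s.left ⊆ {Fm.atom 0} ∧ (s.right = none ∨ s.right = some (Fm.atom 1))) := by
  intro s d
  induction d with
  | hyp hs => exact absurd hs (Set.notMem_empty _)
  | ax ψ =>
    rintro ⟨hl, hr | hr⟩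
    · exact (by cases hr)
    · injection hr with hr
      have h0 : ψ = Fm.atom 0 := hl rfl
      rw [h0] at hr
      injection hr with hr
      exact one_ne_zero hr.symm
  | weakL d hsub ih => rintro ⟨hl, hr⟩; exact ih ⟨Set.Subset.trans hsub hl, hr⟩
  | weakR ψ d ih =>
    rintro ⟨hl, hr | hr⟩
    · exact (by cases hr)
    · exact ih ⟨hl, Or.inl rfl⟩
  | cut hψ da db iha ihb => exact absurd hψ (Set.notMem_empty _)
  | right rr hr σ prems ih =>
    rintro ⟨hl, hr' | hr'⟩
    · exact (by cases hr')
    · injection hr' with hr'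
      exact (by cases hr')
  | left lr hl σ hards softs ihh ihs =>
    rintro ⟨hle, _⟩
    have hmem : Fm.conn lr.conn σ ∈ ({Fm.atom 0} : Set (Fm L)) := hle (Or.inl rfl)
    exact (by simp at hmem)

lemma ce_cons {G : CanSys L} (hce : CutElim G) : Consistent G := by
  intro d
  exact cutfree_cons _ (hce _ d) ⟨subset_refl _, Or.inr rfl⟩

lemma sce_ce {G : CanSys L} (hsce : StrongCutElim G) : CutElim G := by
  intro s d
  have hd := hsce ∅ s d
  have he : cutFms (∅ : Set (Sequent L)) = ∅ := by
    ext φ; simp [cutFms]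
  rwa [he] at hd
end Rest
/-- For definite canonical systems, strong consistency,
coherence, strong cut-elimination, cut-elimination and consistency are
equivalent. -/
theorem definite_equivalences {L : Lang} (G : CanSys L) (hdef : DefiniteSys G) :
    (StronglyConsistent G ↔ Coherent G) ∧ (Coherent G ↔ StrongCutElim G) ∧
    (StrongCutElim G ↔ CutElim G) ∧ (CutElim G ↔ Consistent G) := by
  have c1 : Coherent G → StrongCutElim G := coh_sce hdef
  have c2 : StrongCutElim G → CutElim G := sce_ce
  have c3 : CutElim G → Consistent G := ce_cons
  have c4 : Consistent G → Coherent G := cons_coh hdef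
  exact ⟨⟨sc_coh, coh_sc⟩, ⟨c1, fun h => c4 (c3 (c2 h))⟩,
    ⟨c2, fun h => c1 (c4 (c3 h))⟩, ⟨c3, fun h => c2 (c1 (c4 h))⟩⟩
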